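/- Let k > 0 and R₀ ∈ (0, π/√k), and define R : ℝ → ℝ by R(t) = (2/√k)·arccos(exp(−k·t/2)·cos(√k·R₀/2)). Then R(0) = R₀ and, for every t > 0, R is differentiable at t with derivative R'(t) = √k · cot(√k·R(t)/2). (This is the deterministic distance process of the perverse coupling of Brownian motions on a surface of constant curvature k > 0: dR_t = √k cot(√k R_t/2) dt.) -/

import Mathlib

/-- The deterministic distance process of the perverse coupling on a
surface of constant curvature `k > 0`: `R(t) = (2/√k)·arccos(e^{−kt/2} cos(√k R₀/2))`
satisfies `R(0) = R₀` and `R'(t) = √k · cot(√k R(t)/2)` for all `t > 0`. -/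
theorem perverse_coupling_distance (k R₀ : ℝ) (hk : 0 < k)
    (hR₀ : R₀ ∈ Set.Ioo 0 (Real.pi / Real.sqrt k)) (R : ℝ → ℝ)
    (hR : ∀ t, R t =
      2 / Real.sqrt k * Real.arccos (Real.exp (-(k * t) / 2) * Real.cos (Real.sqrt k * R₀ / 2))) :
    R 0 = R₀ ∧
      ∀ t > (0 : ℝ), HasDerivAt R (Real.sqrt k * Real.cot (Real.sqrt k * R t / 2)) t := by
  obtain ⟨hR₀0, hR₀π⟩ := hR₀
  have hs : 0 < Real.sqrt k := Real.sqrt_pos.2 hk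
  set s := Real.sqrt k with hs_def
  have hs2 : s ^ 2 = k := Real.sq_sqrt hk.le
  have hsR : s * R₀ < Real.pi := by
    have := (lt_div_iff₀ hs).mp hR₀π
    nlinarith
  have hθ0 : 0 < s * R₀ / 2 := by positivity
  have hθπ : s * R₀ / 2 < Real.pi / 2 := by linarith
  set c := Real.cos (s * R₀ / 2) with hc_def
  have hc0 : 0 < c := Real.cos_pos_of_mem_Ioo ⟨by linarith [Real.pi_pos], hθπ⟩
  have hc1 : c < 1 := by
    have := Real.cos_lt_cos_of_nonneg_of_le_pi (le_refl 0) (by linarith [Real.pi_pos]) hθ0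
    simpa using this
  constructor
  · rw [hR 0]
    simp only [mul_zero, neg_zero, zero_div, Real.exp_zero, one_mul]
    rw [Real.arccos_cos (by linarith) (by linarith [Real.pi_pos])]
    field_simp
  · intro t ht
    set x := Real.exp (-(k * t) / 2) * c with hx_def
    have hexp1 : Real.exp (-(k * t) / 2) < 1 := by
      rw [Real.exp_lt_one_iff]
      nlinarith
    have hx0 : 0 < x := by positivity
    have hx1 : x < 1 := by
      calc x < 1 * c := by
              apply mul_lt_mul_of_pos_right hexp1 hc0
        _ = c := one_mul c
        _ < 1 := hc1
    have hxsq : 0 < 1 - x ^ 2 := by nlinarith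
    have hsqrt : 0 < Real.sqrt (1 - x ^ 2) := Real.sqrt_pos.2 hxsq
    have hg : HasDerivAt (fun u => Real.exp (-(k * u) / 2) * c)
        (-(k) / 2 * Real.exp (-(k * t) / 2) * c) t := by
      have h1 : HasDerivAt (fun u : ℝ => -(k * u) / 2) (-(k) / 2) t := by
        simpa using (((hasDerivAt_id t).const_mul k).neg.div_const 2)
      simpa [mul_comm] using (h1.exp.mul_const c)
    have harc : HasDerivAt (fun u => Real.arccos (Real.exp (-(k * u) / 2) * c))
        (-(1 / Real.sqrt (1 - x ^ 2)) * (-(k) / 2 * Real.exp (-(k * t) / 2) * c)) t :=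
      HasDerivAt.comp (h₂ := Real.arccos) t
        (Real.hasDerivAt_arccos (x := x) (by linarith) (ne_of_lt hx1)) hg
    have hRfun : R = fun u => 2 / s *
        Real.arccos (Real.exp (-(k * u) / 2) * c) := funext hR
    rw [hRfun]
    have hmain := harc.const_mul (2 / s)
    refine hmain.congr_deriv ?_
    symm
    -- value equality
    have hRt : s * (2 / s * Real.arccos x) / 2 = Real.arccos x := by
      field_simp
    show s * Real.cot (s * (2 / s * Real.arccos x) / 2) = _
    rw [hRt, Real.cot_eq_cos_div_sin,
        Real.cos_arccos (by linarith) hx1.le, Real.sin_arccos]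
    have hec : Real.exp (-(k * t) / 2) * c = x := rfl
    field_simp
    rw [← neg_div, mul_assoc k, hec]
    linear_combination x * hs2
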